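/- Let G be a group and A a nilpotent normal subgroup such that G/A is nilpotent (i.e., G is metanilpotent in this sense). Then abnormality is transitive in G: if B is abnormal in G and H is abnormal in B, then H is abnormal in G. -/

import Mathlib

/-- The conjugate subgroup `H^g = g⁻¹Hg`. -/
def conjSub {G : Type*} [Group G] (g : G) (H : Subgroup G) : Subgroup G :=
  H.map (MulAut.conj g⁻¹).toMonoidHom

/-- `H` is abnormal in `G`: `g ∈ ⟨H, H^g⟩` for every `g ∈ G`. -/
def IsAbnormal {G : Type*} [Group G] (H : Subgroup G) : Prop :=
  ∀ g : G, g ∈ H ⊔ conjSub g H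

/-- `H` is abnormal in the subgroup `B`: `H ≤ B` and `g ∈ ⟨H, H^g⟩` for every `g ∈ B`. -/
def IsAbnormalIn {G : Type*} [Group G] (H B : Subgroup G) : Prop :=
  H ≤ B ∧ ∀ g ∈ B, g ∈ H ⊔ conjSub g H

section Aux

variable {G : Type*} [Group G]

theorem mem_conjSub {g x : G} {H : Subgroup G} : x ∈ conjSub g H ↔ g * x * g⁻¹ ∈ H := by
  constructor
  · rintro ⟨h, hh, rfl⟩
    simpa [mul_assoc] using hh
  · intro hx
    exact ⟨g * x * g⁻¹, hx, by simp [mul_assoc]⟩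

theorem conjSub_mem_of {g h : G} {H : Subgroup G} (hh : h ∈ H) : g⁻¹ * h * g ∈ conjSub g H := by
  rw [mem_conjSub]
  simpa [mul_assoc] using hh

theorem conjSub_le {g : G} {H K : Subgroup G} (hH : H ≤ K) (hg : g ∈ K) :
    conjSub g H ≤ K := by
  intro x hx
  rw [mem_conjSub] at hx
  have : g⁻¹ * (g * x * g⁻¹) * g ∈ K := K.mul_mem (K.mul_mem (K.inv_mem hg) (hH hx)) hg
  simpa [mul_assoc] using this

theorem conjSub_eq_of_mem {g : G} {H : Subgroup G} (hg : g ∈ H) : conjSub g H = H := by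
  ext x
  rw [mem_conjSub]
  constructor
  · intro hx
    have : g⁻¹ * (g * x * g⁻¹) * g ∈ H := H.mul_mem (H.mul_mem (H.inv_mem hg) hx) hg
    simpa [mul_assoc] using this
  · intro hx
    exact H.mul_mem (H.mul_mem hg hx) (H.inv_mem hg)

theorem conjSub_mul (g₁ g₂ : G) (H : Subgroup G) :
    conjSub (g₁ * g₂) H = conjSub g₂ (conjSub g₁ H) := by
  ext x
  have key : g₁ * g₂ * x * (g₁ * g₂)⁻¹ = g₁ * (g₂ * x * g₂⁻¹) * g₁⁻¹ := by group
  rw [mem_conjSub, mem_conjSub, mem_conjSub, key]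

theorem map_conjSub {G' : Type*} [Group G'] (f : G →* G') (g : G) (H : Subgroup G) :
    (conjSub g H).map f = conjSub (f g) (H.map f) := by
  unfold conjSub
  rw [Subgroup.map_map, Subgroup.map_map]
  congr 1
  ext x
  simp

theorem IsAbnormal.eq_top [Group.IsNilpotent G] {H : Subgroup G} (h : IsAbnormal H) : H = ⊤ := by
  apply (normalizerCondition_iff_only_full_group_self_normalizing.mp
    normalizerCondition_of_isNilpotent) H
  refine le_antisymm (fun g hg => ?_) Subgroup.le_normalizer
  have hconj : conjSub g H = H := by
    ext x
    rw [mem_conjSub]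
    exact (Subgroup.mem_normalizer_iff.mp hg x).symm
  have := h g
  rwa [hconj, sup_idem] at this

theorem IsAbnormal.map {G' : Type*} [Group G'] {H : Subgroup G} (h : IsAbnormal H)
    (f : G →* G') (hf : Function.Surjective f) : IsAbnormal (H.map f) := by
  intro x
  obtain ⟨g, rfl⟩ := hf x
  have := Subgroup.mem_map_of_mem f (h g)
  rwa [Subgroup.map_sup, map_conjSub] at this

theorem IsAbnormalIn.isAbnormal_subgroupOf {H B : Subgroup G} (h : IsAbnormalIn H B) :
    IsAbnormal (H.subgroupOf B) := by
  intro x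
  have hx := h.2 ↑x x.2
  have hmap : Subgroup.map B.subtype (H.subgroupOf B ⊔ conjSub x (H.subgroupOf B))
      = H ⊔ conjSub ↑x H := by
    simp only [Subgroup.map_sup, map_conjSub, Subgroup.subgroupOf_map_subtype,
      inf_eq_left.mpr h.1, Subgroup.coe_subtype]
  rw [← hmap] at hx
  obtain ⟨y, hy, hyx⟩ := hx
  have hyx' : y = x := Subtype.ext hyx
  subst hyx'
  exact hy

theorem IsAbnormal.sup_normal_eq_top {H N : Subgroup G} [N.Normal]
    (hQ : Group.IsNilpotent (G ⧸ N)) (h : IsAbnormal H) : H ⊔ N = ⊤ := by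
  haveI := hQ
  have h1 : (H.map (QuotientGroup.mk' N)) = ⊤ :=
    (h.map _ (QuotientGroup.mk'_surjective N)).eq_top
  have h2 := congrArg (Subgroup.comap (QuotientGroup.mk' N)) h1
  rwa [Subgroup.comap_map_eq, QuotientGroup.ker_mk', Subgroup.comap_top] at h2

theorem IsAbnormalIn.le_sup_normal {H B N : Subgroup G} [N.Normal]
    (hQ : Group.IsNilpotent (G ⧸ N)) (h : IsAbnormalIn H B) : B ≤ H ⊔ N := by
  haveI := hQ
  set φ : ↥B →* G ⧸ N := (QuotientGroup.mk' N).comp B.subtype with hφ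
  haveI : Group.IsNilpotent ↥φ.range := Subgroup.isNilpotent _
  have htop : ((H.subgroupOf B).map φ.rangeRestrict) = ⊤ :=
    (h.isAbnormal_subgroupOf.map _ φ.rangeRestrict_surjective).eq_top
  have hsup : H.subgroupOf B ⊔ φ.rangeRestrict.ker = ⊤ := by
    have h2 := congrArg (Subgroup.comap φ.rangeRestrict) htop
    rwa [Subgroup.comap_map_eq, Subgroup.comap_top] at h2
  intro b hb
  have hbmem : (⟨b, hb⟩ : ↥B) ∈ H.subgroupOf B ⊔ φ.rangeRestrict.ker := by
    rw [hsup]; trivial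
  have hmem : b ∈ Subgroup.map B.subtype (H.subgroupOf B ⊔ φ.rangeRestrict.ker) :=
    ⟨_, hbmem, rfl⟩
  rw [Subgroup.map_sup] at hmem
  have hle : Subgroup.map B.subtype (H.subgroupOf B) ⊔ Subgroup.map B.subtype φ.rangeRestrict.ker
      ≤ H ⊔ N := by
    refine sup_le ?_ ?_
    · rw [Subgroup.subgroupOf_map_subtype, inf_eq_left.mpr h.1]
      exact le_sup_left
    · rintro _ ⟨y, hy, rfl⟩
      rw [MonoidHom.ker_rangeRestrict] at hy
      have : φ y = 1 := hy
      have hyN : (↑y : G) ∈ N := (QuotientGroup.eq_one_iff _).mp this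
      exact Subgroup.mem_sup_right hyN
  exact hle hmem

end Aux

universe u

theorem abnormal_rec (n : ℕ) : ∀ {G : Type u} [Group G] (A B H : Subgroup G) [A.Normal]
    (hA : Group.IsNilpotent ↥A), Group.nilpotencyClass ↥A ≤ n →
    Group.IsNilpotent (G ⧸ A) → IsAbnormal B → IsAbnormalIn H B → IsAbnormal H := by
  induction n with
  | zero =>
    intro G _ A B H _ hA hAc hQ hB hH
    haveI := hA
    have hsub : Subsingleton ↥A :=
      nilpotencyClass_zero_iff_subsingleton.mp (Nat.le_zero.mp hAc)
    have hAbot : A = ⊥ := by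
      rw [eq_bot_iff]
      intro a ha
      have h1 : (⟨a, ha⟩ : ↥A) = ⟨1, A.one_mem⟩ := Subsingleton.elim _ _
      simpa [Subgroup.mem_bot] using congrArg Subtype.val h1
    haveI : Group.IsNilpotent G := by
      haveI := hQ
      exact nilpotent_of_mulEquiv
        ((QuotientGroup.quotientMulEquivOfEq hAbot).trans QuotientGroup.quotientBot)
    have hBtop : B = ⊤ := hB.eq_top
    intro g
    exact hH.2 g (by rw [hBtop]; trivial)
  | succ n ih =>
    intro G _ A B H _ hA hAc hQ hB hH
    haveI := hA
    haveI := hQ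
    set K := (Subgroup.center ↥A).map A.subtype with hKdef
    have hKA : K ≤ A := by rintro _ ⟨z, hz, rfl⟩; exact z.2
    have hKmem : ∀ {x : G}, x ∈ K ↔ x ∈ A ∧ ∀ a ∈ A, x * a = a * x := by
      intro x
      constructor
      · rintro ⟨z, hz, rfl⟩
        refine ⟨z.2, fun a ha => ?_⟩
        have h1 := Subgroup.mem_center_iff.mp hz ⟨a, ha⟩
        have h2 := congrArg (fun y : ↥A => (y : G)) h1
        simpa using h2.symm
      · rintro ⟨hx, hcomm⟩
        exact ⟨⟨x, hx⟩, Subgroup.mem_center_iff.mpr fun g =>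
          Subtype.ext (by simpa using (hcomm ↑g g.2).symm), rfl⟩
    have hKcomm : ∀ {k : G}, k ∈ K → ∀ {a : G}, a ∈ A → k * a = a * k :=
      fun {k} hk {a} ha => (hKmem.mp hk).2 a ha
    haveI hKn : K.Normal := by
      constructor
      intro k hk g
      obtain ⟨hkA, hkc⟩ := hKmem.mp hk
      refine hKmem.mpr ⟨‹A.Normal›.conj_mem k hkA g, fun a ha => ?_⟩
      have h1 : g⁻¹ * a * g ∈ A := by
        simpa using ‹A.Normal›.conj_mem a ha g⁻¹
      have h2 : k * (g⁻¹ * a * g) = (g⁻¹ * a * g) * k := hkc _ h1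
      calc g * k * g⁻¹ * a = g * (k * (g⁻¹ * a * g)) * g⁻¹ := by group
        _ = g * ((g⁻¹ * a * g) * k) * g⁻¹ := by rw [h2]
        _ = a * (g * k * g⁻¹) := by group
    set π := QuotientGroup.mk' K with hπdef
    have hπs : Function.Surjective π := QuotientGroup.mk'_surjective K
    haveI : (A.map π).Normal := Subgroup.Normal.map ‹A.Normal› π hπs
    -- nilpotency of the image of A, with class ≤ n
    set f : ↥A →* G ⧸ K := π.comp A.subtype with hfdef
    have hfker : ∀ z : ↥A, z ∈ Subgroup.center ↥A → f z = 1 := by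
      intro z hz
      have h1 : (↑z : G) ∈ K := ⟨z, hz, rfl⟩
      exact (QuotientGroup.eq_one_iff _).mpr h1
    set φ2 : ↥A →* ↥(A.map π) :=
      f.codRestrict (A.map π) (fun a => ⟨(a : G), a.2, rfl⟩) with hφ2def
    have hφ2s : Function.Surjective φ2 := by
      rintro ⟨x, a, ha, rfl⟩
      exact ⟨⟨a, ha⟩, rfl⟩
    set g0 : (↥A ⧸ Subgroup.center ↥A) →* ↥(A.map π) :=
      QuotientGroup.lift _ φ2 (fun z hz => Subtype.ext (hfker z hz)) with hg0def
    have hg0 : Function.Surjective g0 := by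
      intro x
      obtain ⟨a, rfl⟩ := hφ2s x
      exact ⟨QuotientGroup.mk a, rfl⟩
    haveI hAn' : Group.IsNilpotent ↥(A.map π) := nilpotent_of_surjective g0 hg0
    have hAc' : Group.nilpotencyClass ↥(A.map π) ≤ n := by
      have h1 := nilpotencyClass_le_of_surjective g0 hg0
      have h2 : Group.nilpotencyClass (↥A ⧸ Subgroup.center ↥A)
          = Group.nilpotencyClass ↥A - 1 := nilpotencyClass_quotient_center
      omega
    have hQQ : Group.IsNilpotent ((G ⧸ K) ⧸ (A.map π)) :=
      nilpotent_of_mulEquiv (QuotientGroup.quotientQuotientEquivQuotient K A hKA).symm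
    have hB' : IsAbnormal (B.map π) := hB.map π hπs
    have hH' : IsAbnormalIn (H.map π) (B.map π) := by
      refine ⟨Subgroup.map_mono hH.1, ?_⟩
      rintro _ ⟨b, hb, rfl⟩
      have h1 := Subgroup.mem_map_of_mem π (hH.2 b hb)
      rwa [Subgroup.map_sup, map_conjSub] at h1
    have hHabnQ : IsAbnormal (H.map π) := ih (A.map π) (B.map π) (H.map π) hAn' hAc' hQQ hB' hH'
    -- H ⊔ A = ⊤ and a decomposition of G
    have hBA : B ⊔ A = ⊤ := hB.sup_normal_eq_top hQ
    have hBle : B ≤ H ⊔ A := hH.le_sup_normal hQ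
    have hHA : H ⊔ A = ⊤ :=
      le_antisymm le_top (hBA ▸ sup_le hBle le_sup_right)
    have hdecomp : ∀ g : G, ∃ h ∈ H, ∃ a ∈ A, h * a = g := by
      intro g
      have hg : g ∈ (↑(H ⊔ A) : Set G) := by rw [hHA]; trivial
      rwa [Subgroup.mul_normal] at hg
    -- main claim: every element of A is abnormally captured
    have key : ∀ a ∈ A, a ∈ H ⊔ conjSub a H := by
      intro a ha
      set J := H ⊔ conjSub a H with hJ
      have hHJ : H ≤ J := le_sup_left
      -- quotient abnormality gives a ∈ J ⊔ K
      have h1 := hHabnQ (π a)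
      rw [← map_conjSub, ← Subgroup.map_sup] at h1
      have h2 : a ∈ J ⊔ K := by
        have h3 : a ∈ Subgroup.comap π (Subgroup.map π J) := Subgroup.mem_comap.mpr h1
        rwa [Subgroup.comap_map_eq, QuotientGroup.ker_mk'] at h3
      rw [← SetLike.mem_coe, Subgroup.mul_normal J K] at h2
      obtain ⟨d, hd, z, hz, hdz⟩ := h2
      replace hdz : d * z = a := hdz
      replace hd : d ∈ J := hd
      replace hz : z ∈ K := hz
      have hzA : z ∈ A := hKA hz
      have hdA : d ∈ A := by
        have hdval : d = a * z⁻¹ := by rw [← hdz]; group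
        exact hdval ▸ A.mul_mem ha (A.inv_mem hzA)
      have hzd : z * d = d * z := hKcomm hz hdA
      have hzd' : d * z⁻¹ = z⁻¹ * d := by
        have h4 : z * (d * z⁻¹) = z * (z⁻¹ * d) := by
          rw [← mul_assoc, hzd]; group
        exact mul_left_cancel h4
      -- conjugation by z lands in J
      have hconj : ∀ h ∈ H, z⁻¹ * h * z ∈ J := by
        intro h hh
        have hzval : z = d⁻¹ * a := by rw [← hdz]; group
        have had : a⁻¹ * d = d * a⁻¹ := by
          rw [← hdz, mul_inv_rev]
          calc z⁻¹ * d⁻¹ * d = z⁻¹ * d * d⁻¹ := by group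
            _ = d * z⁻¹ * d⁻¹ := by rw [← hzd']
            _ = d * (z⁻¹ * d⁻¹) := by group
        have had2 : d⁻¹ * a = a * d⁻¹ := by
          have h5 := congrArg (fun x => x⁻¹) had
          simpa [mul_inv_rev] using h5
        have heq : z⁻¹ * h * z = d * (a⁻¹ * h * a) * d⁻¹ := by
          rw [hzval]
          calc (d⁻¹ * a)⁻¹ * h * (d⁻¹ * a) = (a⁻¹ * d) * h * (d⁻¹ * a) := by group
            _ = (d * a⁻¹) * h * (a * d⁻¹) := by rw [had, had2]
            _ = d * (a⁻¹ * h * a) * d⁻¹ := by group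
        rw [heq]
        exact J.mul_mem (J.mul_mem hd (Subgroup.mem_sup_right (conjSub_mem_of hh))) (J.inv_mem hd)
      -- D = K ⊓ J is normal in G
      set D := K ⊓ J with hDdef
      haveI hDn : D.Normal := by
        constructor
        intro w hw g
        obtain ⟨hwK, hwJ⟩ := hw
        obtain ⟨h, hh, α, hα, rfl⟩ := hdecomp g
        have hwα : α * w * α⁻¹ = w := by
          have h6 : α * w = w * α := (hKcomm hwK hα).symm
          rw [h6]; group
        have h7 : h * α * w * (h * α)⁻¹ = h * w * h⁻¹ := by
          rw [mul_inv_rev]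
          calc h * α * w * (α⁻¹ * h⁻¹) = h * (α * w * α⁻¹) * h⁻¹ := by group
            _ = h * w * h⁻¹ := by rw [hwα]
        rw [h7]
        exact ⟨hKn.conj_mem w hwK h,
          J.mul_mem (J.mul_mem (hHJ hh) hwJ) (J.inv_mem (hHJ hh))⟩
      -- conjugates of B by z stay in B ⊔ D
      have hBz : ∀ b ∈ B, z⁻¹ * b * z ∈ B ⊔ D := by
        intro b hb
        obtain ⟨h, hh, α, hα, rfl⟩ := hdecomp b
        have huK : h⁻¹ * z⁻¹ * h * z ∈ K := by
          have h8 : h⁻¹ * z⁻¹ * (h⁻¹)⁻¹ ∈ K := hKn.conj_mem z⁻¹ (K.inv_mem hz) h⁻¹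
          have h9 : h⁻¹ * z⁻¹ * h ∈ K := by simpa using h8
          exact K.mul_mem h9 hz
        have huJ : h⁻¹ * z⁻¹ * h * z ∈ J := by
          have h10 : h⁻¹ * (z⁻¹ * h * z) ∈ J :=
            J.mul_mem (J.inv_mem (hHJ hh)) (hconj h hh)
          simpa [mul_assoc] using h10
        have hu : h⁻¹ * z⁻¹ * h * z ∈ D := ⟨huK, huJ⟩
        have hαz : α * z = z * α := (hKcomm hz hα).symm
        have huα : (h⁻¹ * z⁻¹ * h * z) * α = α * (h⁻¹ * z⁻¹ * h * z) := hKcomm huK hα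
        have hcb : z⁻¹ * (h * α) * z = (h * α) * (h⁻¹ * z⁻¹ * h * z) := by
          calc z⁻¹ * (h * α) * z = z⁻¹ * h * (α * z) := by group
            _ = z⁻¹ * h * (z * α) := by rw [hαz]
            _ = h * ((h⁻¹ * z⁻¹ * h * z) * α) := by group
            _ = h * (α * (h⁻¹ * z⁻¹ * h * z)) := by rw [huα]
            _ = (h * α) * (h⁻¹ * z⁻¹ * h * z) := by group
        rw [hcb]
        exact Subgroup.mul_mem _ (Subgroup.mem_sup_left hb) (Subgroup.mem_sup_right hu)
      -- abnormality of B applied to z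
      have hzBD : z ∈ B ⊔ D := by
        have hle : conjSub z B ≤ B ⊔ D := by
          intro x hx
          rw [mem_conjSub] at hx
          have h11 := hBz _ hx
          simpa [mul_assoc] using h11
        exact (sup_le le_sup_left hle) (hB z)
      rw [← SetLike.mem_coe, Subgroup.mul_normal B D] at hzBD
      obtain ⟨b, hb, w, hw, hbw⟩ := hzBD
      replace hbw : b * w = z := hbw
      replace hb : b ∈ B := hb
      replace hw : w ∈ D := hw
      have hwJ : w ∈ J := hw.2
      have hwK : w ∈ K := hw.1
      -- b lands in J by abnormality of H in B
      have hbJ : b ∈ J := by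
        have hmem := hH.2 b hb
        have hbeq : b = z * w⁻¹ := by rw [← hbw]; group
        have hle : H ⊔ conjSub b H ≤ J := by
          refine sup_le hHJ ?_
          intro x hx
          rw [mem_conjSub] at hx
          have hx' : x = b⁻¹ * (b * x * b⁻¹) * b := by group
          rw [hx']
          have h12 : b⁻¹ * (b * x * b⁻¹) * b = w * (z⁻¹ * (b * x * b⁻¹) * z) * w⁻¹ := by
            rw [hbeq]; group
          rw [h12]
          exact J.mul_mem (J.mul_mem hwJ (hconj _ hx)) (J.inv_mem hwJ)
        exact hle hmem
      have hzJ : z ∈ J := by rw [← hbw]; exact J.mul_mem hbJ hwJ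
      have : d * z ∈ J := J.mul_mem hd hzJ
      rwa [hdz] at this
    -- conclude
    intro g
    obtain ⟨h, hh, a, ha, hha⟩ := hdecomp g
    replace hha : h * a = g := hha
    subst hha
    have hconjeq : conjSub (h * a) H = conjSub a H := by
      rw [conjSub_mul, conjSub_eq_of_mem hh]
    rw [hconjeq]
    exact Subgroup.mul_mem _ (Subgroup.mem_sup_left hh) (key a ha)

theorem abnormality_transitive_metanilpotent {G : Type*} [Group G]
    (A : Subgroup G) [A.Normal] [Group.IsNilpotent A] [Group.IsNilpotent (G ⧸ A)]
    (B H : Subgroup G) (hB : IsAbnormal B) (hH : IsAbnormalIn H B) :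
    IsAbnormal H :=
  abnormal_rec (Group.nilpotencyClass ↥A) A B H ‹_› le_rfl ‹_› hB hH
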